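/- Let S₀, S₁, …, S_k ⊆ B be pairwise isolated subsets with 0 < π(S_i) < 1 for every i. Then E_k − E₀ ≤ max_{i=0,…,k} (−⟨ψ| 1_{S_i} H 1_{B∖S_i} |ψ⟩)/(π(S_i)·π(B∖S_i)). -/

import Mathlib

open scoped BigOperators ComplexOrder

/-- The ℓ²-operator norm of a matrix over ℂ. -/
noncomputable def opNorm {B : Type*} [Fintype B] [DecidableEq B] (H : Matrix B B ℂ) : ℝ :=
  ‖Matrix.toEuclideanCLM (𝕜 := ℂ) H‖

/-- The ground-state probability measure of a subset `S`. -/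
noncomputable def piS {B : Type*} (ψ : B → ℂ) (S : Finset B) : ℝ :=
  ∑ z ∈ S, ‖ψ z‖ ^ 2

open scoped Classical in
/-- The interior boundary `∂S` of the set `S` with respect to the matrix `H`. -/
noncomputable def bdry {B : Type*} [Fintype B] (H : Matrix B B ℂ) (S : Finset B) : Finset B :=
  S.filter (fun x => ∃ y ∉ S, H x y ≠ 0)

open Finset
section helpers
variable {B : Type*} [Fintype B] [DecidableEq B]

set_option linter.unusedSectionVars false
set_option maxHeartbeats 800000

lemma eig_smul (H : Matrix B B ℂ) (hH : H.IsHermitian) (j : B) :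
    Matrix.toEuclideanLin H (hH.eigenvectorBasis j)
      = ((hH.eigenvalues j : ℝ) : ℂ) • hH.eigenvectorBasis j := by
  have h := hH.mulVec_eigenvectorBasis j
  ext x
  have := congrFun h x
  simpa [Matrix.toEuclideanLin_apply, Complex.real_smul] using this

lemma quad_expand {ι : Type*} [Fintype ι]
    (T : EuclideanSpace ℂ B →ₗ[ℂ] EuclideanSpace ℂ B)
    (v : ι → EuclideanSpace ℂ B) (c : ι → ℂ) :
    (inner (𝕜 := ℂ) (∑ i, c i • v i) (T (∑ i, c i • v i))) =
      ∑ i, ∑ j, (starRingEnd ℂ) (c i) * c j * (inner (𝕜 := ℂ) (v i) (T (v j))) := by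
  rw [map_sum, sum_inner]
  refine Finset.sum_congr rfl fun i _ => ?_
  rw [inner_smul_left, inner_sum, Finset.mul_sum]
  refine Finset.sum_congr rfl fun j _ => ?_
  rw [map_smul, inner_smul_right]; ring

lemma quad_diag {ι : Type*} [Fintype ι] [DecidableEq ι]
    (T : EuclideanSpace ℂ B →ₗ[ℂ] EuclideanSpace ℂ B)
    (v : ι → EuclideanSpace ℂ B) (c : ι → ℂ) (d : ι → ℂ)
    (h : ∀ i j, (inner (𝕜 := ℂ) (v i) (T (v j))) = if i = j then d i else 0) :
    (inner (𝕜 := ℂ) (∑ i, c i • v i) (T (∑ i, c i • v i))) =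
      ∑ i, ((‖c i‖ : ℂ) ^ 2) * d i := by
  rw [quad_expand]
  refine Finset.sum_congr rfl fun i _ => ?_
  rw [Finset.sum_eq_single i]
  · rw [h i i, if_pos rfl, RCLike.conj_mul]; push_cast [mul_comm]; rfl
  · intro j _ hj; rw [h i j, if_neg (Ne.symm hj), mul_zero]
  · intro hi; exact absurd (mem_univ i) hi

lemma norm_sq_sum {ι : Type*} [Fintype ι] [DecidableEq ι]
    (v : ι → EuclideanSpace ℂ B) (c : ι → ℂ)
    (hv : Orthonormal ℂ v) :
    ‖∑ i, c i • v i‖ ^ 2 = ∑ i, ‖c i‖ ^ 2 := by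
  have h := quad_diag (B := B) LinearMap.id v c (fun _ => 1)
    (fun i j => by simpa using orthonormal_iff_ite.mp hv i j)
  simp only [LinearMap.id_coe, id_eq] at h
  have h2 : ‖∑ i, c i • v i‖ ^ 2
      = RCLike.re (inner (𝕜 := ℂ) (∑ i, c i • v i) (∑ i, c i • v i)) :=
    norm_sq_eq_re_inner _
  rw [h2, h]
  simp [← Complex.ofReal_pow]

lemma rayleigh_lower (H : Matrix B B ℂ) (hH : H.IsHermitian) (μ : ℝ) (t : Finset B)
    (ht : ∀ x ∈ t, μ ≤ hH.eigenvalues x) (v : EuclideanSpace ℂ B)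
    (hv : v ∈ Submodule.span ℂ (Set.range fun x : t => hH.eigenvectorBasis x)) :
    μ * ‖v‖ ^ 2 ≤ (RCLike.re (inner (𝕜 := ℂ) v (Matrix.toEuclideanLin H v))) := by
  rw [Submodule.mem_span_range_iff_exists_fun] at hv
  obtain ⟨c, rfl⟩ := hv
  have horth : Orthonormal ℂ (fun x : t => hH.eigenvectorBasis x) :=
    hH.eigenvectorBasis.orthonormal.comp _ Subtype.val_injective
  have hdiag : ∀ i j : t, (inner (𝕜 := ℂ) (hH.eigenvectorBasis i)
      (Matrix.toEuclideanLin H (hH.eigenvectorBasis j)))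
      = if i = j then ((hH.eigenvalues i : ℝ) : ℂ) else 0 := by
    intro i j
    rw [eig_smul H hH j, inner_smul_right]
    have := orthonormal_iff_ite.mp horth i j
    rw [this]
    by_cases hij : i = j
    · subst hij; simp
    · simp [hij]
  rw [quad_diag _ _ _ _ hdiag, norm_sq_sum _ _ horth]
  have : RCLike.re (∑ i : t, ((‖c i‖ : ℂ)) ^ 2 * ((hH.eigenvalues i : ℝ) : ℂ))
      = ∑ i : t, ‖c i‖ ^ 2 * hH.eigenvalues i := by
    rw [map_sum]
    refine Finset.sum_congr rfl fun i _ => ?_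
    norm_cast
  rw [this, Finset.mul_sum]
  refine Finset.sum_le_sum fun i _ => ?_
  have h1 : (0:ℝ) ≤ ‖c i‖ ^ 2 := by positivity
  have := ht i i.2
  nlinarith

lemma span_basis_univ (H : Matrix B B ℂ) (hH : H.IsHermitian) (v : EuclideanSpace ℂ B) :
    v ∈ Submodule.span ℂ
      (Set.range fun x : (Finset.univ : Finset B) => hH.eigenvectorBasis x) := by
  have hr : (Set.range fun x : (Finset.univ : Finset B) => hH.eigenvectorBasis x)
      = Set.range hH.eigenvectorBasis := by
    ext y
    constructor
    · rintro ⟨x, rfl⟩; exact ⟨x, rfl⟩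
    · rintro ⟨x, rfl⟩; exact ⟨⟨x, mem_univ x⟩, rfl⟩
  rw [hr]
  have := hH.eigenvectorBasis.toBasis.span_eq
  rw [OrthonormalBasis.coe_toBasis] at this
  rw [this]
  trivial
end helpers

set_option maxHeartbeats 2000000 in
/-- Conductance bound for higher eigenvalues: for pairwise isolated subsets
`S₀,…,S_k` with `0 < π(Sᵢ) < 1`,
`E_k - E₀ ≤ max_i (-⟨ψ|1_{Sᵢ} H 1_{B∖Sᵢ}|ψ⟩)/(π(Sᵢ)π(B∖Sᵢ))`. -/
theorem stmt_3 {B : Type*} [Fintype B] [DecidableEq B]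
    (H : Matrix B B ℂ) (hH : H.IsHermitian) (hPSD : H.PosSemidef)
    -- `E` enumerates the eigenvalues of `H` (with multiplicity) in increasing order:
    (E : ℕ → ℝ) (hmono : Monotone E)
    (henum : ∃ σ : Fin (Fintype.card B) ≃ B,
      ∀ i : Fin (Fintype.card B), E i = hH.eigenvalues (σ i))
    -- `ψ` is a unit-norm ground state:
    (ψ : B → ℂ) (hψnorm : ∑ z, ‖ψ z‖ ^ 2 = 1)
    (hground : H.mulVec ψ = (E 0 : ℂ) • ψ)
    -- the subsets `S 0, …, S k` are pairwise disjoint and isolated: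
    (k : ℕ) (S : Fin (k + 1) → Finset B)
    (hdisj : ∀ i j, i ≠ j → Disjoint (S i) (S j))
    (hiso : ∀ i j, i ≠ j → ∀ x ∈ S i, ∀ y ∈ S j, H x y = 0)
    (hS0 : ∀ i, 0 < piS ψ (S i)) (hS1 : ∀ i, piS ψ (S i) < 1) :
    E k - E 0 ≤
      Finset.univ.sup' Finset.univ_nonempty
        (fun i : Fin (k + 1) =>
          (-(∑ x ∈ S i, ∑ y ∈ (S i)ᶜ, (starRingEnd ℂ) (ψ x) * H x y * ψ y).re) /
            (piS ψ (S i) * piS ψ (S i)ᶜ)) := by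
  classical
  obtain ⟨σ, hσ⟩ := henum
  set T := Matrix.toEuclideanLin H with hT
  set b := hH.eigenvectorBasis with hb
  set lam := hH.eigenvalues with hlam
  set Cq : Fin (k + 1) → ℂ :=
    fun i => ∑ x ∈ S i, ∑ y ∈ (S i)ᶜ, (starRingEnd ℂ) (ψ x) * H x y * ψ y with hCq
  set M : ℝ := Finset.univ.sup' Finset.univ_nonempty
        (fun i : Fin (k + 1) =>
          (-(Cq i).re) / (piS ψ (S i) * piS ψ (S i)ᶜ)) with hM
  -- the indicator vectors
  set u : Fin (k + 1) → EuclideanSpace ℂ B :=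
    fun i => WithLp.toLp 2 (fun z => if z ∈ S i then ψ z else 0) with hu
  -- complement measure
  have hπc : ∀ i, piS ψ (S i)ᶜ = 1 - piS ψ (S i) := by
    intro i
    have := Finset.sum_add_sum_compl (S i) (fun z => ‖ψ z‖ ^ 2)
    rw [hψnorm] at this
    simp only [piS]
    linarith
  -- E 0 is the least eigenvalue
  have hE0min : ∀ x : B, E 0 ≤ lam x := by
    intro x
    have h1 := hσ (σ.symm x)
    rw [Equiv.apply_symm_apply] at h1
    rw [← h1]
    exact hmono (Nat.zero_le _)
  -- k + 1 ≤ n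
  have hkn : k + 1 ≤ Fintype.card B := by
    have hne : ∀ i, (S i).Nonempty := by
      intro i
      rw [Finset.nonempty_iff_ne_empty]
      intro h
      have := hS0 i
      rw [piS, h] at this
      simp at this
    choose pt hpt using hne
    have hinj : Function.Injective pt := by
      intro i j hij
      by_contra hne'
      exact (Finset.disjoint_left.mp (hdisj i j hne') (hpt i)) (hij ▸ hpt j)
    simpa using Fintype.card_le_of_injective pt hinj
  -- inner products of the indicators
  have hinner_uu : ∀ i j, (inner (𝕜 := ℂ) (u i) (u j))
      = if i = j then ((piS ψ (S i) : ℝ) : ℂ) else 0 := by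
    intro i j
    simp only [PiLp.inner_apply, RCLike.inner_apply', hu, PiLp.toLp_apply]
    by_cases hij : i = j
    · subst hij
      rw [if_pos rfl]
      have hterm : ∀ z : B, (starRingEnd ℂ) (if z ∈ S i then ψ z else 0) *
          (if z ∈ S i then ψ z else 0) = if z ∈ S i then ((‖ψ z‖ ^ 2 : ℝ) : ℂ) else 0 := by
        intro z
        by_cases h : z ∈ S i
        · simp [h, RCLike.conj_mul]
        · simp [h]
      rw [Finset.sum_congr rfl fun z _ => hterm z, Finset.sum_ite_mem, Finset.univ_inter, piS]
      push_cast
      rfl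
    · rw [if_neg hij]
      apply Finset.sum_eq_zero
      intro z _
      by_cases h1 : z ∈ S i
      · have h2 : z ∉ S j := Finset.disjoint_left.mp (hdisj i j hij) h1
        simp [h1, h2]
      · simp [h1]
  have hTu : ∀ (j : Fin (k+1)) (x : B), (T (u j)) x = ∑ y ∈ S j, H x y * ψ y := by
    intro j x
    have h0 : (T (u j)) x = ∑ y : B, H x y * (u j y) := by
      rw [hT, Matrix.toEuclideanLin_apply]
      simp [Matrix.mulVec, dotProduct]
    rw [h0, hu]
    simp only [PiLp.toLp_apply, mul_ite, mul_zero]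
    rw [Finset.sum_ite_mem, Finset.univ_inter]
  have hquadu : ∀ i j, (inner (𝕜 := ℂ) (u i) (T (u j)))
      = if i = j then ((E 0 : ℂ) * ((piS ψ (S i) : ℝ) : ℂ) - Cq i) else 0 := by
    intro i j
    have hlhs : (inner (𝕜 := ℂ) (u i) (T (u j)))
        = ∑ x ∈ S i, (starRingEnd ℂ) (ψ x) * ∑ y ∈ S j, H x y * ψ y := by
      simp only [PiLp.inner_apply, RCLike.inner_apply']
      rw [Finset.sum_congr rfl (fun x _ => by rw [hTu j x])]
      simp only [hu, PiLp.toLp_apply]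
      have hterm : ∀ x : B, (starRingEnd ℂ) (if x ∈ S i then ψ x else 0) *
          (∑ y ∈ S j, H x y * ψ y)
          = if x ∈ S i then (starRingEnd ℂ) (ψ x) * (∑ y ∈ S j, H x y * ψ y) else 0 := by
        intro x
        by_cases h : x ∈ S i <;> simp [h]
      rw [Finset.sum_congr rfl fun x _ => hterm x, Finset.sum_ite_mem, Finset.univ_inter]
    by_cases hij : i = j
    · subst hij
      rw [if_pos rfl, hlhs]
      have hsplit : ∀ x : B, (∑ y ∈ S i, H x y * ψ y)
          = (E 0 : ℂ) * ψ x - ∑ y ∈ (S i)ᶜ, H x y * ψ y := by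
        intro x
        have h1 : (∑ y ∈ S i, H x y * ψ y) + ∑ y ∈ (S i)ᶜ, H x y * ψ y
            = ∑ y : B, H x y * ψ y := Finset.sum_add_sum_compl (S i) _
        have h2 : ∑ y : B, H x y * ψ y = (E 0 : ℂ) * ψ x := by
          have h3 := congrFun hground x
          simpa [Matrix.mulVec, dotProduct] using h3
        exact eq_sub_of_add_eq (h1.trans h2)
      rw [Finset.sum_congr rfl fun x _ => by rw [hsplit x]]
      rw [Finset.sum_congr rfl fun x _ => mul_sub ((starRingEnd ℂ) (ψ x)) _ _]
      rw [Finset.sum_sub_distrib]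
      congr 1
      · have hterm : ∀ x : B, (starRingEnd ℂ) (ψ x) * ((E 0 : ℂ) * ψ x)
            = (E 0 : ℂ) * ((‖ψ x‖ ^ 2 : ℝ) : ℂ) := by
          intro x
          rw [mul_left_comm, RCLike.conj_mul]
          push_cast
          rfl
        rw [Finset.sum_congr rfl fun x _ => hterm x, ← Finset.mul_sum]
        congr 1
        rw [piS]
        push_cast
        rfl
      · rw [hCq]
        refine Finset.sum_congr rfl fun x _ => ?_
        rw [Finset.mul_sum]
        exact Finset.sum_congr rfl fun y _ => by ring
    · rw [if_neg hij, hlhs]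
      apply Finset.sum_eq_zero
      intro x hx
      have hz : ∀ y ∈ S j, H x y * ψ y = 0 := fun y hy => by
        rw [hiso i j hij x hx y hy, zero_mul]
      rw [Finset.sum_congr rfl hz, Finset.sum_const_zero, mul_zero]
  -- (Cq i).re ≤ 0
  have hnormu : ∀ i, ‖u i‖ ^ 2 = piS ψ (S i) := by
    intro i
    have h0 := norm_sq_eq_re_inner (𝕜 := ℂ) (u i)
    rw [hinner_uu i i, if_pos rfl] at h0
    simpa using h0
  have hCqre : ∀ i, (Cq i).re ≤ 0 := by
    intro i
    have hb1 := rayleigh_lower H hH (E 0) Finset.univ (fun x _ => hE0min x) (u i)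
      (span_basis_univ H hH (u i))
    rw [← hT] at hb1
    have h2 : RCLike.re (inner (𝕜 := ℂ) (u i) (T (u i)))
        = E 0 * piS ψ (S i) - (Cq i).re := by
      rw [hquadu i i, if_pos rfl]
      simp [← Complex.ofReal_mul]
    rw [h2, hnormu i] at hb1
    linarith
  -- M is an upper bound in the right way
  have hMge : ∀ i, -(Cq i).re ≤ M * piS ψ (S i) := by
    intro i
    have hrat := Finset.le_sup' (b := i)
      (f := fun i => (-(Cq i).re) / (piS ψ (S i) * piS ψ (S i)ᶜ)) (Finset.mem_univ i)
    rw [← hM] at hrat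
    have hπ := hS0 i
    have hπc' : 0 < piS ψ (S i)ᶜ := by rw [hπc i]; linarith [hS1 i]
    have hden : 0 < piS ψ (S i) * piS ψ (S i)ᶜ := mul_pos hπ hπc'
    have h1 : -(Cq i).re ≤ M * (piS ψ (S i) * piS ψ (S i)ᶜ) := by
      have := (div_le_iff₀ hden).mp hrat
      linarith
    have hM0 : 0 ≤ M := by
      have h2 : 0 ≤ (-(Cq i).re) / (piS ψ (S i) * piS ψ (S i)ᶜ) := by
        apply div_nonneg _ hden.le
        linarith [hCqre i]
      linarith
    have hπc1 : piS ψ (S i)ᶜ ≤ 1 := by rw [hπc i]; linarith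
    have h3 : M * (piS ψ (S i) * piS ψ (S i)ᶜ) ≤ M * piS ψ (S i) := by
      have h4 := mul_le_mul_of_nonneg_left hπc1 (mul_nonneg hM0 hπ.le)
      nlinarith
    linarith
  -- normalized family
  set s : Fin (k + 1) → ℝ := fun i => Real.sqrt (piS ψ (S i)) with hs
  have hs2 : ∀ i, s i ^ 2 = piS ψ (S i) := fun i => Real.sq_sqrt (hS0 i).le
  have hspos : ∀ i, 0 < s i := fun i => Real.sqrt_pos.mpr (hS0 i)
  set e : Fin (k + 1) → EuclideanSpace ℂ B := fun i => ((s i : ℂ))⁻¹ • u i with he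
  have hinner_ee : ∀ i j, (inner (𝕜 := ℂ) (e i) (e j))
      = if i = j then (1 : ℂ) else 0 := by
    intro i j
    simp only [he]
    rw [inner_smul_left, inner_smul_right, hinner_uu, map_inv₀, Complex.conj_ofReal]
    by_cases hij : i = j
    · subst hij
      rw [if_pos rfl, if_pos rfl]
      have hsne : s i ≠ 0 := (hspos i).ne'
      have hr : (s i)⁻¹ * ((s i)⁻¹ * piS ψ (S i)) = 1 := by
        rw [← hs2 i]
        field_simp
      exact_mod_cast congrArg Complex.ofReal hr
    · rw [if_neg hij, if_neg hij, mul_zero, mul_zero]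
  have horth_e : Orthonormal ℂ e := orthonormal_iff_ite.mpr hinner_ee
  set q : Fin (k + 1) → ℂ := fun i =>
    (((piS ψ (S i))⁻¹ : ℝ) : ℂ) * ((E 0 : ℂ) * ((piS ψ (S i) : ℝ) : ℂ) - Cq i) with hq
  have hquad_ee : ∀ i j, (inner (𝕜 := ℂ) (e i) (T (e j)))
      = if i = j then q i else 0 := by
    intro i j
    simp only [he]
    rw [map_smul, inner_smul_left, inner_smul_right, hquadu, map_inv₀, Complex.conj_ofReal]
    by_cases hij : i = j
    · subst hij
      rw [if_pos rfl, if_pos rfl, hq]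
      have hr : (s i)⁻¹ * (s i)⁻¹ = (piS ψ (S i))⁻¹ := by
        rw [← hs2 i, sq, mul_inv]
      have hc : ((s i : ℂ))⁻¹ * ((s i : ℂ))⁻¹ = (((piS ψ (S i))⁻¹ : ℝ) : ℂ) :=
        mod_cast congrArg Complex.ofReal hr
      rw [← mul_assoc, hc]
    · simp [hij]
  have hqre : ∀ i, (q i).re ≤ E 0 + M := by
    intro i
    have h1 : (q i).re = (piS ψ (S i))⁻¹ * (E 0 * piS ψ (S i) - (Cq i).re) := by
      rw [hq]
      simp [Complex.re_ofReal_mul, Complex.sub_re, ← Complex.ofReal_mul, Complex.ofReal_re]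
    have hπ := hS0 i
    rw [h1, inv_mul_le_iff₀ hπ]
    nlinarith [hMge i]
  -- the two subspaces
  set W := Submodule.span ℂ (Set.range e) with hW
  set J := Finset.univ.filter (fun x : B => E k ≤ lam x) with hJ
  set U := Submodule.span ℂ (Set.range fun x : J => b x) with hU
  have hdimW : Module.finrank ℂ W = k + 1 := by
    rw [hW, finrank_span_eq_card horth_e.linearIndependent]; simp
  have hdimU : Module.finrank ℂ U = J.card := by
    have hli : LinearIndependent ℂ (fun x : J => b x) :=
      (hH.eigenvectorBasis.orthonormal.comp _ Subtype.val_injective).linearIndependent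
    rw [hU, finrank_span_eq_card hli]
    simp
  have hJcard : Fintype.card B - k ≤ J.card := by
    have hmaps : ∀ i : Fin (Fintype.card B - k),
        σ (⟨k + i, by have := i.isLt; omega⟩ : Fin (Fintype.card B)) ∈ J := by
      intro i
      rw [hJ, Finset.mem_filter]
      refine ⟨Finset.mem_univ _, ?_⟩
      have h1 := hσ ⟨k + i, by have := i.isLt; omega⟩
      rw [← h1]
      exact hmono (Nat.le_add_right k i)
    calc Fintype.card B - k
        = (Finset.univ : Finset (Fin (Fintype.card B - k))).card := by simp
      _ ≤ J.card := by
          refine Finset.card_le_card_of_injOn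
            (fun i : Fin (Fintype.card B - k) =>
              σ (⟨k + i, by have := i.isLt; omega⟩ : Fin (Fintype.card B)))
            (fun i _ => hmaps i) ?_
          intro a _ b _ hab
          have h2 := σ.injective hab
          have h3 : (k + (a : ℕ)) = (k + (b : ℕ)) := congrArg Fin.val h2
          exact Fin.ext (by omega)
  -- intersection is nontrivial
  obtain ⟨w, hwWU, hw0⟩ : ∃ w, w ∈ W ⊓ U ∧ w ≠ 0 := by
    have hfin : Module.finrank ℂ ↥(W ⊔ U) ≤ Fintype.card B := by
      have h1 := Submodule.finrank_le (W ⊔ U)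
      rwa [finrank_euclideanSpace] at h1
    have h2 := Submodule.finrank_sup_add_finrank_inf_eq W U
    have h3 : 0 < Module.finrank ℂ ↥(W ⊓ U) := by omega
    have h4 : W ⊓ U ≠ ⊥ := by
      intro h
      rw [h, finrank_bot] at h3
      exact lt_irrefl 0 h3
    exact Submodule.exists_mem_ne_zero_of_ne_bot h4
  obtain ⟨hwW, hwU⟩ := hwWU
  -- lower bound from U
  have hlow : E k * ‖w‖ ^ 2 ≤ RCLike.re (inner (𝕜 := ℂ) w (T w)) :=
    rayleigh_lower H hH (E k) J (fun x hx => (Finset.mem_filter.mp hx).2) w hwU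
  -- upper bound from W
  have hup : RCLike.re (inner (𝕜 := ℂ) w (T w)) ≤ (E 0 + M) * ‖w‖ ^ 2 := by
    have hwW' : w ∈ Submodule.span ℂ (Set.range e) := hwW
    obtain ⟨c, hc⟩ := (Submodule.mem_span_range_iff_exists_fun ℂ).mp hwW'
    rw [← hc, quad_diag T e c q hquad_ee, norm_sq_sum e c horth_e, map_sum, Finset.mul_sum]
    apply Finset.sum_le_sum
    intro i _
    have h5 : RCLike.re ((((‖c i‖ : ℝ)) : ℂ) ^ 2 * q i) = ‖c i‖ ^ 2 * (q i).re := by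
      simp [← Complex.ofReal_pow]
    rw [h5]
    have h6 := hqre i
    nlinarith [sq_nonneg ‖c i‖]
  have hwpos : (0:ℝ) < ‖w‖ ^ 2 := pow_pos (norm_pos_iff.mpr hw0) 2
  have : E k ≤ E 0 + M := by nlinarith
  linarith
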